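/- Closest ℓ¹-point of the Alexiewicz ball: for f ∈ ℝⁿ, θ > 0, β ∈ [0,1], define recursively c*_1 = -sgn(f_1)·min{|f_1|, θ} and c*_{k+1} = -sgn(f_{k+1} - βc*_k)·min{|f_{k+1} - βc*_k|, θ}. Then the point p with p_1 = f_1 + c*_1 and p_{k+1} = f_{k+1} - βc*_k + c*_{k+1} minimizes the ℓ¹ norm over the set {(f_1 + c_1, f_2 - βc_1 + c_2, …, f_n - βc_{n-1} + c_n) : |c_k| ≤ θ for all k}. -/

import Mathlib

/-- The recursively-defined optimal shear coefficients. -/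
noncomputable def cstar (θ β : ℝ) (f : ℕ → ℝ) : ℕ → ℝ
  | 0 => -Real.sign (f 0) * min |f 0| θ
  | k + 1 => -Real.sign (f (k + 1) - β * cstar θ β f k) * min |f (k + 1) - β * cstar θ β f k| θ

/-- The sheared point associated to a coefficient sequence `c`. -/
def shearPt (β : ℝ) (f c : ℕ → ℝ) : ℕ → ℝ
  | 0 => f 0 + c 0
  | k + 1 => f (k + 1) - β * c k + c (k + 1)

/-- 1D fact: soft-thresholding is optimal, with exact slack `|c - c*|`. -/
lemma key_1d (θ : ℝ) (g c : ℝ) (hc : |c| ≤ θ) :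
    |g + (-Real.sign g * min |g| θ)| + |c - (-Real.sign g * min |g| θ)| = |g + c| := by
  obtain ⟨h1, h2⟩ := abs_le.1 hc
  rcases lt_trichotomy g 0 with hg | hg | hg
  · rw [Real.sign_of_neg hg, abs_of_neg hg]
    rcases le_total (-g) θ with h | h
    · rw [min_eq_left h]
      rw [show g + - -1 * -g = 0 by ring, abs_zero, zero_add,
        show c - - -1 * -g = c + g by ring, add_comm]
    · rw [min_eq_right h]
      rw [show g + - -1 * θ = g + θ by ring, show c - - -1 * θ = c - θ by ring,
        abs_of_nonpos (by linarith), abs_of_nonpos (by linarith),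
        abs_of_nonpos (by linarith)]
      ring
  · simp [hg]
  · rw [Real.sign_of_pos hg, abs_of_pos hg]
    rcases le_total g θ with h | h
    · rw [min_eq_left h]
      rw [show g + -1 * g = 0 by ring, abs_zero, zero_add,
        show c - -1 * g = c + g by ring, add_comm]
    · rw [min_eq_right h]
      rw [show g + -1 * θ = g - θ by ring, show c - -1 * θ = c + θ by ring,
        abs_of_nonneg (by linarith), abs_of_nonneg (by linarith),
        abs_of_nonneg (by linarith)]
      ring

/-- Strengthened invariant for the induction. -/
lemma aux_inv (θ β : ℝ) (hβ0 : 0 ≤ β) (hβ1 : β ≤ 1) (f c : ℕ → ℝ) :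
    ∀ n : ℕ, (∀ k ≤ n, |c k| ≤ θ) →
      ∑ k ∈ Finset.range (n + 1), |shearPt β f (cstar θ β f) k|
        + β * |c n - cstar θ β f n| ≤
      ∑ k ∈ Finset.range (n + 1), |shearPt β f c k| := by
  intro n
  induction n with
  | zero =>
    intro hfe
    rw [Finset.sum_range_one, Finset.sum_range_one]
    have hk := key_1d θ (f 0) (c 0) (hfe 0 le_rfl)
    have hβabs : β * |c 0 - cstar θ β f 0| ≤ |c 0 - cstar θ β f 0| := by
      nlinarith [abs_nonneg (c 0 - cstar θ β f 0)]
    simp only [shearPt]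
    simp only [cstar] at hβabs ⊢
    linarith
  | succ m ih =>
    intro hfe
    have ihm := ih (fun k hk => hfe k (hk.trans (Nat.le_succ m)))
    rw [Finset.sum_range_succ, Finset.sum_range_succ (f := fun k => |shearPt β f c k|)]
    set g : ℝ := f (m + 1) - β * cstar θ β f m with hg
    have hp : shearPt β f (cstar θ β f) (m + 1) = g + (-Real.sign g * min |g| θ) := by
      simp only [shearPt, cstar, hg]
    have hk := key_1d θ g (c (m + 1)) (hfe (m + 1) le_rfl)
    -- |g + c(m+1)| ≤ |p(m+1)| + β|c m - c* m|
    have htri : |g + c (m + 1)| ≤ |shearPt β f c (m + 1)| + β * |c m - cstar θ β f m| := by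
      have : g + c (m + 1) = (f (m + 1) - β * c m + c (m + 1)) + β * (c m - cstar θ β f m) := by
        rw [hg]; ring
      rw [this]
      calc |(f (m + 1) - β * c m + c (m + 1)) + β * (c m - cstar θ β f m)|
          ≤ |f (m + 1) - β * c m + c (m + 1)| + |β * (c m - cstar θ β f m)| := abs_add_le _ _
        _ = |shearPt β f c (m + 1)| + β * |c m - cstar θ β f m| := by
            rw [abs_mul, abs_of_nonneg hβ0]; rfl
    have hβabs : β * |c (m + 1) - cstar θ β f (m + 1)| ≤ |c (m + 1) - cstar θ β f (m + 1)| := by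
      nlinarith [abs_nonneg (c (m + 1) - cstar θ β f (m + 1))]
    have hcst : cstar θ β f (m + 1) = -Real.sign g * min |g| θ := by
      simp only [cstar, hg]
    rw [hp, hcst]
    rw [hcst] at hβabs
    linarith

theorem closest_l1_point_of_alexiewicz_ball (θ β : ℝ) (hθ : 0 < θ)
    (hβ : β ∈ Set.Icc (0 : ℝ) 1) (n : ℕ) (f : ℕ → ℝ) :
    ∀ c : ℕ → ℝ, (∀ k < n, |c k| ≤ θ) →
      ∑ k ∈ Finset.range n, |shearPt β f (cstar θ β f) k| ≤
        ∑ k ∈ Finset.range n, |shearPt β f c k| := by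
  intro c hc
  cases n with
  | zero => simp
  | succ m =>
    have h := aux_inv θ β hβ.1 hβ.2 f c m (fun k hk => hc k (Nat.lt_succ_of_le hk))
    have : 0 ≤ β * |c m - cstar θ β f m| :=
      mul_nonneg hβ.1 (abs_nonneg _)
    linarith
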